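/- Let A be a real d×d matrix and let ψ : [0,∞) × ℝ^d → ℂ be such that ψ_0(ξ) = 0 for all ξ, for each fixed ξ the map t ↦ ψ_t(ξ) is differentiable with continuous derivative, and ψ_{t+s}(ξ) = ψ_t(ξ) + ψ_s(exp(tA)·ξ) for all s, t ≥ 0 and all ξ ∈ ℝ^d. Define γ(ξ) = (d/dt)ψ_t(ξ)|_{t=0}. Then for every t ≥ 0 and every ξ ∈ ℝ^d, ψ_t(ξ) = ∫_0^t γ(exp(τA)·ξ) dτ. -/

import Mathlib

noncomputable section
open Matrix
open scoped ComplexOrder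

/-- If `ψ_0 = 0`, each `t ↦ ψ_t(ξ)` is differentiable on `[0,∞)` with continuous
derivative, and `ψ_{t+s}(ξ) = ψ_t(ξ) + ψ_s(exp(tA)·ξ)`, then with
`γ(ξ) = (d/dt)ψ_t(ξ)|_{t=0}` we have `ψ_t(ξ) = ∫_0^t γ(exp(τA)·ξ) dτ`. -/
theorem additive_cocycle_integral (d : ℕ) (A : Matrix (Fin d) (Fin d) ℝ)
    (ψ : ℝ → (Fin d → ℝ) → ℂ)
    (h0 : ∀ ξ, ψ 0 ξ = 0)
    (hdiff : ∀ ξ, ∀ t ∈ Set.Ici (0:ℝ),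
      DifferentiableWithinAt ℝ (fun s => ψ s ξ) (Set.Ici 0) t)
    (hcont : ∀ ξ, ContinuousOn (derivWithin (fun s => ψ s ξ) (Set.Ici 0)) (Set.Ici 0))
    (hadd : ∀ s t : ℝ, 0 ≤ s → 0 ≤ t → ∀ ξ,
      ψ (t + s) ξ = ψ t ξ + ψ s ((NormedSpace.exp (t • A)).mulVec ξ))
    (γ : (Fin d → ℝ) → ℂ)
    (hγ : ∀ ξ, γ ξ = derivWithin (fun s => ψ s ξ) (Set.Ici 0) 0) :
    ∀ t : ℝ, 0 ≤ t → ∀ ξ,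
      ψ t ξ = ∫ τ in (0:ℝ)..t, γ ((NormedSpace.exp (τ • A)).mulVec ξ) := by
  -- Key: for every `t ≥ 0` and `ξ`, `ψ` has right derivative `γ(exp(tA)·ξ)` at `t`.
  have key : ∀ t : ℝ, 0 ≤ t → ∀ ξ, HasDerivWithinAt (fun s => ψ s ξ)
      (γ ((NormedSpace.exp (t • A)).mulVec ξ)) (Set.Ici t) t := by
    intro t ht ξ
    set η := (NormedSpace.exp (t • A)).mulVec ξ with hη
    have H0 : HasDerivWithinAt (fun s => ψ s η) (γ η) (Set.Ici (0:ℝ)) 0 := by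
      rw [hγ η]
      exact (hdiff η 0 (Set.mem_Ici.mpr le_rfl)).hasDerivWithinAt
    have hsub : HasDerivWithinAt (fun s : ℝ => s - t) 1 (Set.Ici t) t :=
      (hasDerivWithinAt_id t (Set.Ici t)).sub_const t
    have hmaps : Set.MapsTo (fun s : ℝ => s - t) (Set.Ici t) (Set.Ici (0:ℝ)) := by
      intro s hs; simp only [Set.mem_Ici] at *; linarith
    have Hcomp := HasDerivWithinAt.scomp_of_eq t H0 hsub hmaps (sub_self t).symm
    have Hcomp' : HasDerivWithinAt (fun s => ψ t ξ + ψ (s - t) η) (γ η)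
        (Set.Ici t) t := by
      simpa [Function.comp] using Hcomp.const_add (ψ t ξ)
    refine Hcomp'.congr (fun s hs => ?_) ?_
    · have hs' : (0:ℝ) ≤ s - t := by simp only [Set.mem_Ici] at hs; linarith
      have := hadd (s - t) t hs' ht ξ
      rw [show t + (s - t) = s by ring] at this
      rw [this]
    · simp [h0, sub_self]
  -- derivWithin on Ici 0 equals γ(exp(τA)·ξ) for τ ≥ 0
  have keyd : ∀ ξ, ∀ t : ℝ, 0 ≤ t →
      derivWithin (fun s => ψ s ξ) (Set.Ici 0) t
        = γ ((NormedSpace.exp (t • A)).mulVec ξ) := by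
    intro ξ t ht
    have h1 : HasDerivWithinAt (fun s => ψ s ξ)
        (derivWithin (fun s => ψ s ξ) (Set.Ici 0) t) (Set.Ici t) t :=
      (hdiff ξ t ht).hasDerivWithinAt.mono (Set.Ici_subset_Ici.mpr ht)
    have h2 := key t ht ξ
    have hu : UniqueDiffWithinAt ℝ (Set.Ici t) t := uniqueDiffOn_Ici t t (Set.mem_Ici.mpr le_rfl)
    have := h1.derivWithin hu
    rw [← this, h2.derivWithin hu]
  intro t ht ξ
  have hint : IntervalIntegrable
      (fun τ => γ ((NormedSpace.exp (τ • A)).mulVec ξ)) MeasureTheory.volume 0 t := by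
    have hco : ContinuousOn (fun τ => γ ((NormedSpace.exp (τ • A)).mulVec ξ))
        (Set.Icc 0 t) := by
      refine ((hcont ξ).mono (Set.Icc_subset_Ici_self)).congr ?_
      intro τ hτ
      exact (keyd ξ τ hτ.1).symm
    exact hco.intervalIntegrable_of_Icc ht
  have hfc : ContinuousOn (fun s => ψ s ξ) (Set.Icc 0 t) := by
    intro s hs
    exact ((hdiff ξ s hs.1).continuousWithinAt).mono Set.Icc_subset_Ici_self
  have := intervalIntegral.integral_eq_sub_of_hasDeriv_right_of_le ht hfc
    (fun τ hτ => ((key τ hτ.1.le ξ).mono (Set.Ioi_subset_Ici_self))) hint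
  rw [this, h0 ξ, sub_zero]
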